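/- Over the algebra A = 𝟙 ⊕ m in Vec_{ℤ/2×ℤ/2}, the relative tensor product of bimodules satisfies (e ⊕ f)₀ ⊗_A (𝟙 ⊕ m)₁ ≅ (e ⊕ f)₁ as A-A bimodules. -/
import Mathlib


open TensorProduct

/-! Bimodules over `A = 𝟙 ⊕ m = ℂ[{1,b}]` in `Vec_{ℤ/2×ℤ/2}` (trivial associator).
Each of the bimodules `(e⊕f)₀`, `(𝟙⊕m)₁`, `(e⊕f)₁` has a 2-dimensional underlying space,
encoded as `ℤ/2 → ℂ`; the actions of the grade-`b` generator of `A` are either the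
untwisted translation (fusion-rule type) or its twist by `−1`. -/

/-- Common underlying space of the bimodules involved. -/
abbrev W14 := ZMod 2 → ℂ

/-- Untwisted (fusion-rule type) action of the grade-`x` element of `A`. -/
def regAct (x : ZMod 2) : W14 →ₗ[ℂ] W14 where
  toFun w := fun i => w (i + x)
  map_add' _ _ := rfl
  map_smul' _ _ := rfl

/-- Twisted action: the grade-`b` element acts by `−1` times the translation. -/
def twAct (x : ZMod 2) : W14 →ₗ[ℂ] W14 where
  toFun w := fun i => (if x = 1 then (-1 : ℂ) else 1) * w (i + x)
  map_add' _ _ := by funext; by_cases h : x = 1 <;> simp [h] <;> ring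
  map_smul' _ _ := by funext; by_cases h : x = 1 <;> simp [h] <;> ring

noncomputable section Aux14

def sgn14 (i : ZMod 2) : ℂ := if i = 0 then 1 else -1

lemma zmod2_cases : ∀ i : ZMod 2, i = 0 ∨ i = 1 := by decide

lemma sgn14_sq (i : ZMod 2) : sgn14 i * sgn14 i = 1 := by
  rcases zmod2_cases i with h | h <;> simp [h, sgn14]

lemma two_eq_zero14 : (2 : ZMod 2) = 0 := by decide

lemma one_add_one14 : (1 + 1 : ZMod 2) = 0 := by decide

lemma sgn14_succ (i : ZMod 2) : sgn14 (i + 1) = - sgn14 i := by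
  rcases zmod2_cases i with h | h <;> subst h
  · norm_num [sgn14, show (0 + 1 : ZMod 2) = 1 by decide, show (1 : ZMod 2) ≠ 0 by decide]
  · rw [one_add_one14]
    norm_num [sgn14, show (1 : ZMod 2) ≠ 0 by decide]

lemma zmod2_add_self (i : ZMod 2) : i + 1 + 1 = i := by
  rcases zmod2_cases i with h | h <;> subst h <;> decide

def B14 : W14 →ₗ[ℂ] W14 →ₗ[ℂ] W14 :=
  LinearMap.mk₂ ℂ (fun m n => fun i => sgn14 i * (m i * n 0 - m (i + 1) * n 1))
    (fun m m' n => by funext i; simp; ring)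
    (fun c m n => by funext i; simp; ring)
    (fun m n n' => by funext i; simp; ring)
    (fun c m n => by funext i; simp; ring)

def pi14 : W14 ⊗[ℂ] W14 →ₗ[ℂ] W14 := TensorProduct.lift B14

@[simp] lemma pi14_tmul (m n : W14) :
    pi14 (m ⊗ₜ[ℂ] n) = fun i => sgn14 i * (m i * n 0 - m (i + 1) * n 1) := rfl

def D14 : W14 →ₗ[ℂ] W14 where
  toFun w := fun i => sgn14 i * w i
  map_add' _ _ := by funext i; simp; ring
  map_smul' _ _ := by funext i; simp; ring

def delta14 (j : ZMod 2) : W14 := fun i => if i = j then 1 else 0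

def sigma14 : W14 →ₗ[ℂ] W14 ⊗[ℂ] W14 :=
  ((TensorProduct.mk ℂ W14 W14).flip (delta14 0)) ∘ₗ D14

lemma pi14_sigma (w : W14) : pi14 (sigma14 w) = w := by
  funext i
  simp [sigma14, D14, delta14, TensorProduct.mk_apply]
  rw [← mul_assoc, sgn14_sq, one_mul]


lemma D14_D14 (w : W14) : D14 (D14 w) = w := by
  funext i; simp [D14, ← mul_assoc, sgn14_sq]

lemma sigma14_apply (w : W14) : sigma14 w = (D14 w) ⊗ₜ[ℂ] delta14 0 := rfl

lemma pi14_delta0 (m : W14) : pi14 (m ⊗ₜ[ℂ] delta14 0) = D14 m := by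
  funext i
  simp [pi14_tmul, D14, delta14, show (1 : ZMod 2) ≠ 0 by decide]

lemma sigma14_pi14_delta0 (m : W14) :
    sigma14 (pi14 (m ⊗ₜ[ℂ] delta14 0)) = m ⊗ₜ[ℂ] delta14 0 := by
  rw [pi14_delta0, sigma14_apply, D14_D14]

lemma sigma14_pi14_delta1 (m : W14) :
    sigma14 (pi14 (m ⊗ₜ[ℂ] delta14 1)) = (-(regAct 1 m)) ⊗ₜ[ℂ] delta14 0 := by
  rw [sigma14_apply]
  congr 1
  funext i
  simp [D14, pi14_tmul, delta14, regAct, show (0 : ZMod 2) ≠ 1 by decide,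
    ← mul_assoc, sgn14_sq]

lemma twAct_one_delta0 : twAct 1 (delta14 0) = -(delta14 1) := by
  funext i
  rcases zmod2_cases i with h | h <;> subst h <;>
    simp [twAct, delta14, one_add_one14, show (0 : ZMod 2) ≠ 1 by decide,
      show (0 + 1 : ZMod 2) = 1 by decide, show (1 : ZMod 2) ≠ 0 by decide]

lemma n_decomp (n : W14) : n = n 0 • delta14 0 + n 1 • delta14 1 := by
  funext i
  rcases zmod2_cases i with h | h <;> subst h <;>
    simp [delta14, show (0 : ZMod 2) ≠ 1 by decide, show (1 : ZMod 2) ≠ 0 by decide]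

end Aux14

theorem relative_tensor_product_iso :
    ∃ π : W14 ⊗[ℂ] W14 →ₗ[ℂ] W14,
      Function.Surjective π ∧
      LinearMap.ker π = Submodule.span ℂ
        {z | ∃ (x : ZMod 2) (m n : W14), z = (regAct x m) ⊗ₜ[ℂ] n - m ⊗ₜ[ℂ] (twAct x n)} ∧
      (∀ (x : ZMod 2) (m n : W14),
        π ((regAct x m) ⊗ₜ[ℂ] n) = twAct x (π (m ⊗ₜ[ℂ] n))) ∧
      (∀ (x : ZMod 2) (m n : W14),
        π (m ⊗ₜ[ℂ] (regAct x n)) = regAct x (π (m ⊗ₜ[ℂ] n))) := by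
  refine ⟨pi14, ?_, ?_, ?_, ?_⟩
  · intro w; exact ⟨sigma14 w, pi14_sigma w⟩
  · -- kernel equality
    apply le_antisymm
    · -- ker ≤ span
      have key : ∀ y : W14 ⊗[ℂ] W14,
          y - sigma14 (pi14 y) ∈ Submodule.span ℂ
            {z | ∃ (x : ZMod 2) (m n : W14),
              z = (regAct x m) ⊗ₜ[ℂ] n - m ⊗ₜ[ℂ] (twAct x n)} := by
        intro y
        induction y using TensorProduct.induction_on with
        | zero => simpa using Submodule.zero_mem _
        | tmul m n =>
            have hdec : m ⊗ₜ[ℂ] n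
                = n 0 • (m ⊗ₜ[ℂ] delta14 0) + n 1 • (m ⊗ₜ[ℂ] delta14 1) := by
              conv_lhs => rw [n_decomp n]
              rw [tmul_add, tmul_smul, tmul_smul]
            rw [hdec]
            have h1 : (m ⊗ₜ[ℂ] delta14 1) - sigma14 (pi14 (m ⊗ₜ[ℂ] delta14 1))
                = (regAct 1 m) ⊗ₜ[ℂ] delta14 0 - m ⊗ₜ[ℂ] (twAct 1 (delta14 0)) := by
              rw [sigma14_pi14_delta1, twAct_one_delta0, tmul_neg, sub_neg_eq_add,
                neg_tmul, sub_neg_eq_add]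
              abel
            have hmem : (m ⊗ₜ[ℂ] delta14 1) - sigma14 (pi14 (m ⊗ₜ[ℂ] delta14 1))
                ∈ Submodule.span ℂ
                  {z | ∃ (x : ZMod 2) (m n : W14),
                    z = (regAct x m) ⊗ₜ[ℂ] n - m ⊗ₜ[ℂ] (twAct x n)} := by
              rw [h1]
              exact Submodule.subset_span ⟨1, m, delta14 0, rfl⟩
            have hexp : (n 0 • (m ⊗ₜ[ℂ] delta14 0) + n 1 • (m ⊗ₜ[ℂ] delta14 1))
                - sigma14 (pi14 (n 0 • (m ⊗ₜ[ℂ] delta14 0) + n 1 • (m ⊗ₜ[ℂ] delta14 1)))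
                = n 1 • ((m ⊗ₜ[ℂ] delta14 1) - sigma14 (pi14 (m ⊗ₜ[ℂ] delta14 1))) := by
              simp only [map_add, map_smul, sigma14_pi14_delta0, smul_sub]
              abel
            rw [hexp]
            exact Submodule.smul_mem _ _ hmem
        | add a b ha hb =>
            have : (a + b) - sigma14 (pi14 (a + b))
                = (a - sigma14 (pi14 a)) + (b - sigma14 (pi14 b)) := by
              simp only [map_add]; abel
            rw [this]
            exact Submodule.add_mem _ ha hb
      intro z hz
      have h := key z
      rw [LinearMap.mem_ker] at hz
      rw [hz, map_zero, sub_zero] at h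
      exact h
    · rw [Submodule.span_le]
      rintro z ⟨x, m, n, rfl⟩
      simp only [SetLike.mem_coe, LinearMap.mem_ker, map_sub, sub_eq_zero]
      rcases zmod2_cases x with h | h <;> subst h
      · funext i
        simp [regAct, twAct, pi14_tmul, zmod2_add_self, one_add_one14,
          sgn14_succ, show (1 : ZMod 2) ≠ 0 by decide]
      · funext i
        simp [regAct, twAct, pi14_tmul, zmod2_add_self, one_add_one14,
          sgn14_succ, show (1 : ZMod 2) ≠ 0 by decide]
        exact Or.inl (by ring)
  · -- left intertwining
    intro x m n
    rcases zmod2_cases x with h | h <;> subst h <;> funext i <;>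
      simp [regAct, twAct, pi14_tmul, sgn14_succ, zmod2_add_self, one_add_one14] <;> ring
  · -- right intertwining
    intro x m n
    rcases zmod2_cases x with h | h <;> subst h <;> funext i <;>
      simp [regAct, pi14_tmul, sgn14_succ, zmod2_add_self, one_add_one14] <;> ring
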